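/- For every r ∈ ℂ with r ∉ ℤ, the osp(1|2)-representation U_0^{osp}(r) is irreducible: the only subspaces of U_0^{osp}(r) invariant under all five operators E, H, F, X, Y are the zero subspace and U_0^{osp}(r) itself. -/

import Mathlib

/-!
The `osp(1|2)`-module `U_0^{osp}(r)`: underlying space `(ℤ ⊕ ℤ) →₀ ℂ`, where
`Sum.inl i` encodes the basis vector `E_i` and `Sum.inr i` encodes the basis
vector `E_{i−1/2}`.
-/

/-- `E·E_i = E_{i−1}`, `E·E_{i−1/2} = E_{i−3/2}`. -/
noncomputable def Eosp : Module.End ℂ ((ℤ ⊕ ℤ) →₀ ℂ) :=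
  Finsupp.lift ((ℤ ⊕ ℤ) →₀ ℂ) ℂ (ℤ ⊕ ℤ)
    (Sum.elim (fun i => Finsupp.single (Sum.inl (i - 1)) 1)
              (fun i => Finsupp.single (Sum.inr (i - 1)) 1))

/-- `H·E_i = −(2i+2r+1)·E_i`, `H·E_{i−1/2} = −(2i+2r)·E_{i−1/2}`. -/
noncomputable def Hosp (r : ℂ) : Module.End ℂ ((ℤ ⊕ ℤ) →₀ ℂ) :=
  Finsupp.lift ((ℤ ⊕ ℤ) →₀ ℂ) ℂ (ℤ ⊕ ℤ)
    (Sum.elim (fun i => (-(2 * (i : ℂ) + 2 * r + 1)) • Finsupp.single (Sum.inl i) 1)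
              (fun i => (-(2 * (i : ℂ) + 2 * r)) • Finsupp.single (Sum.inr i) 1))

/-- `F·E_i = −(r+i+1)²·E_{i+1}`, `F·E_{i−1/2} = −(r+i+1)(r+i)·E_{i+1/2}`. -/
noncomputable def Fosp (r : ℂ) : Module.End ℂ ((ℤ ⊕ ℤ) →₀ ℂ) :=
  Finsupp.lift ((ℤ ⊕ ℤ) →₀ ℂ) ℂ (ℤ ⊕ ℤ)
    (Sum.elim
      (fun i => (-((r + (i : ℂ) + 1) ^ 2)) • Finsupp.single (Sum.inl (i + 1)) 1)
      (fun i => (-((r + (i : ℂ) + 1) * (r + (i : ℂ)))) • Finsupp.single (Sum.inr (i + 1)) 1))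

/-- `X·E_i = E_{i−1/2}`, `X·E_{i−1/2} = E_{i−1}`. -/
noncomputable def Xosp : Module.End ℂ ((ℤ ⊕ ℤ) →₀ ℂ) :=
  Finsupp.lift ((ℤ ⊕ ℤ) →₀ ℂ) ℂ (ℤ ⊕ ℤ)
    (Sum.elim (fun i => Finsupp.single (Sum.inr i) 1)
              (fun i => Finsupp.single (Sum.inl (i - 1)) 1))

/-- `Y·E_i = −(r+i+1)·E_{i+1/2}`, `Y·E_{i−1/2} = −(r+i)·E_i`. -/
noncomputable def Yosp (r : ℂ) : Module.End ℂ ((ℤ ⊕ ℤ) →₀ ℂ) :=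
  Finsupp.lift ((ℤ ⊕ ℤ) →₀ ℂ) ℂ (ℤ ⊕ ℤ)
    (Sum.elim (fun i => (-(r + (i : ℂ) + 1)) • Finsupp.single (Sum.inr (i + 1)) 1)
              (fun i => (-(r + (i : ℂ))) • Finsupp.single (Sum.inl i) 1))


/-- The weight of the basis vector indexed by `k`. -/
noncomputable def wt (r : ℂ) : ℤ ⊕ ℤ → ℂ :=
  Sum.elim (fun i => -(2 * (i : ℂ) + 2 * r + 1)) (fun i => -(2 * (i : ℂ) + 2 * r))

lemma Hosp_single (r : ℂ) (k : ℤ ⊕ ℤ) (c : ℂ) :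
    Hosp r (Finsupp.single k c) = wt r k • Finsupp.single k c := by
  cases k <;>
  · rw [Hosp, Finsupp.lift_apply, Finsupp.sum_single_index (by simp)]
    simp only [wt, Sum.elim_inl, Sum.elim_inr]
    rw [smul_smul, Finsupp.smul_single', Finsupp.smul_single']
    congr 1
    ring

lemma Hosp_apply (r : ℂ) (v : (ℤ ⊕ ℤ) →₀ ℂ) (k : ℤ ⊕ ℤ) :
    Hosp r v k = wt r k * v k := by
  induction v using Finsupp.induction_linear with
  | zero => simp
  | add u w hu hw => simp [map_add, hu, hw, mul_add]
  | single a c =>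
    rw [Hosp_single]
    rcases eq_or_ne a k with rfl | h
    · simp
    · simp [Finsupp.single_apply, h]

lemma wt_injective (r : ℂ) : Function.Injective (wt r) := by
  intro j k h
  rcases j with i | i <;> rcases k with m | m <;> simp only [wt, Sum.elim_inl, Sum.elim_inr] at h
  · have : (i : ℂ) = m := by linear_combination -h / 2
    exact congrArg Sum.inl (by exact_mod_cast this)
  · exfalso
    have : ((2 * i + 1 : ℤ) : ℂ) = ((2 * m : ℤ) : ℂ) := by push_cast; linear_combination -h
    have := Int.cast_injective (α := ℂ) this
    omega
  · exfalso
    have : ((2 * i : ℤ) : ℂ) = ((2 * m + 1 : ℤ) : ℂ) := by push_cast; linear_combination -h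
    have := Int.cast_injective (α := ℂ) this
    omega
  · have : (i : ℂ) = m := by linear_combination -h / 2
    exact congrArg Sum.inr (by exact_mod_cast this)

/-- Any invariant subspace under `H` contains all the "coordinates" of its elements. -/
lemma single_coord_mem (r : ℂ) (p : Submodule ℂ ((ℤ ⊕ ℤ) →₀ ℂ))
    (hH : ∀ v ∈ p, Hosp r v ∈ p) :
    ∀ v ∈ p, ∀ k, Finsupp.single k (v k) ∈ p := by
  suffices h : ∀ n : ℕ, ∀ v ∈ p, v.support.card ≤ n → ∀ k, Finsupp.single k (v k) ∈ p by
    intro v hv k; exact h v.support.card v hv le_rfl k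
  intro n
  induction n with
  | zero =>
    intro v hv hc k
    have : v = 0 := by
      rwa [Nat.le_zero, Finset.card_eq_zero, Finsupp.support_eq_empty] at hc
    simp [this]
  | succ n ih =>
    intro v hv hc k
    by_cases hk : v k = 0
    · simp [hk]
    by_cases hsub : v.support ⊆ {k}
    · have hv' : v = Finsupp.single k (v k) :=
        (Finsupp.support_subset_singleton.mp hsub)
      rwa [← hv']
    · obtain ⟨j, hj, hjk⟩ : ∃ j ∈ v.support, j ≠ k := by
        rcases Finset.not_subset.mp hsub with ⟨j, hj1, hj2⟩
        exact ⟨j, hj1, by simpa using hj2⟩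
      set w : (ℤ ⊕ ℤ) →₀ ℂ := Hosp r v - wt r j • v with hw
      have hwp : w ∈ p := p.sub_mem (hH v hv) (p.smul_mem _ hv)
      have hwap : ∀ k', w k' = (wt r k' - wt r j) * v k' := by
        intro k'
        simp [hw, Hosp_apply]
        ring
      have hwsub : w.support ⊂ v.support := by
        constructor
        · intro a ha
          simp only [Finsupp.mem_support_iff] at ha ⊢
          intro h0
          exact ha (by rw [hwap, h0, mul_zero])
        · intro hsub'
          have : w j = 0 := by rw [hwap]; ring
          exact (Finsupp.mem_support_iff.mp (hsub' hj)) this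
      have hcard : w.support.card ≤ n :=
        Nat.lt_succ_iff.mp (lt_of_lt_of_le (Finset.card_lt_card hwsub) hc)
      have hkey := ih w hwp hcard k
      have hne : wt r k - wt r j ≠ 0 := by
        intro h
        exact hjk (wt_injective r (sub_eq_zero.mp h)).symm
      have : Finsupp.single k (v k) = (wt r k - wt r j)⁻¹ • Finsupp.single k (w k) := by
        rw [hwap, Finsupp.smul_single', ← mul_assoc, inv_mul_cancel₀ hne, one_mul]
      rw [this]
      exact p.smul_mem _ hkey

section singles
variable (r : ℂ)

lemma Xosp_inl (i : ℤ) : Xosp (Finsupp.single (Sum.inl i) 1) = Finsupp.single (Sum.inr i) 1 := by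
  rw [Xosp, Finsupp.lift_apply, Finsupp.sum_single_index (by simp), one_smul, Sum.elim_inl]

lemma Xosp_inr (i : ℤ) :
    Xosp (Finsupp.single (Sum.inr i) 1) = Finsupp.single (Sum.inl (i - 1)) 1 := by
  rw [Xosp, Finsupp.lift_apply, Finsupp.sum_single_index (by simp), one_smul, Sum.elim_inr]

lemma Yosp_inl (i : ℤ) : Yosp r (Finsupp.single (Sum.inl i) 1) =
    (-(r + (i : ℂ) + 1)) • Finsupp.single (Sum.inr (i + 1)) 1 := by
  rw [Yosp, Finsupp.lift_apply, Finsupp.sum_single_index (by simp), one_smul, Sum.elim_inl]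

lemma Yosp_inr (i : ℤ) : Yosp r (Finsupp.single (Sum.inr i) 1) =
    (-(r + (i : ℂ))) • Finsupp.single (Sum.inl i) 1 := by
  rw [Yosp, Finsupp.lift_apply, Finsupp.sum_single_index (by simp), one_smul, Sum.elim_inr]

end singles


/-- For `r ∉ ℤ`, the `osp(1|2)`-representation `U_0^{osp}(r)` is irreducible: its only
subspaces invariant under all of `E, H, F, X, Y` are `⊥` and `⊤`. -/
theorem U0osp_irreducible (r : ℂ) (hr : ∀ n : ℤ, r ≠ (n : ℂ)) :
    ∀ p : Submodule ℂ ((ℤ ⊕ ℤ) →₀ ℂ),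
      (∀ v ∈ p, Eosp v ∈ p) →
      (∀ v ∈ p, Hosp r v ∈ p) →
      (∀ v ∈ p, Fosp r v ∈ p) →
      (∀ v ∈ p, Xosp v ∈ p) →
      (∀ v ∈ p, Yosp r v ∈ p) →
      p = ⊥ ∨ p = ⊤ := by
  intro p hE hH hF hX hY
  by_cases hbot : p = ⊥
  · exact Or.inl hbot
  right
  -- obtain a nonzero element
  obtain ⟨v, hvp, hv0⟩ : ∃ v ∈ p, v ≠ 0 := by
    by_contra h
    push_neg at h
    exact hbot ((Submodule.eq_bot_iff p).mpr h)
  obtain ⟨k, hk⟩ : ∃ k, v k ≠ 0 := by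
    by_contra h
    push_neg at h
    exact hv0 (Finsupp.ext h)
  have hsk : Finsupp.single k (v k) ∈ p := single_coord_mem r p hH v hvp k
  have hk1 : Finsupp.single k 1 ∈ p := by
    have : Finsupp.single k 1 = (v k)⁻¹ • Finsupp.single k (v k) := by
      rw [Finsupp.smul_single', inv_mul_cancel₀ hk]
    rw [this]; exact p.smul_mem _ hsk
  -- basic steps
  have stepX1 : ∀ i : ℤ, Finsupp.single (Sum.inl i) 1 ∈ p →
      Finsupp.single (Sum.inr i) 1 ∈ p := fun i h => by
    have := hX _ h; rwa [Xosp_inl] at this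
  have stepX2 : ∀ i : ℤ, Finsupp.single (Sum.inr i) 1 ∈ p →
      Finsupp.single (Sum.inl (i - 1)) 1 ∈ p := fun i h => by
    have := hX _ h; rwa [Xosp_inr] at this
  have stepY1 : ∀ i : ℤ, Finsupp.single (Sum.inl i) 1 ∈ p →
      Finsupp.single (Sum.inr (i + 1)) 1 ∈ p := fun i h => by
    have h1 := hY _ h
    rw [Yosp_inl] at h1
    have hne : (-(r + (i : ℂ) + 1)) ≠ 0 := by
      intro h0
      exact hr (-(i + 1)) (by push_cast; linear_combination -h0)
    have h2 := p.smul_mem (-(r + (i : ℂ) + 1))⁻¹ h1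
    rwa [smul_smul, inv_mul_cancel₀ hne, one_smul] at h2
  have stepY2 : ∀ i : ℤ, Finsupp.single (Sum.inr i) 1 ∈ p →
      Finsupp.single (Sum.inl i) 1 ∈ p := fun i h => by
    have h1 := hY _ h
    rw [Yosp_inr] at h1
    have hne : (-(r + (i : ℂ))) ≠ 0 := by
      intro h0
      exact hr (-i) (by push_cast; linear_combination -h0)
    have h2 := p.smul_mem (-(r + (i : ℂ)))⁻¹ h1
    rwa [smul_smul, inv_mul_cancel₀ hne, one_smul] at h2
  -- ladder: from some inl i₀ ∈ p, get all inl i ∈ p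
  obtain ⟨i₀, hi₀⟩ : ∃ i : ℤ, Finsupp.single (Sum.inl i) 1 ∈ p := by
    rcases k with i | i
    · exact ⟨i, hk1⟩
    · exact ⟨i, stepY2 i hk1⟩
  have up : ∀ i : ℤ, Finsupp.single (Sum.inl i) 1 ∈ p →
      Finsupp.single (Sum.inl (i + 1)) 1 ∈ p := fun i h =>
    stepY2 (i + 1) (stepY1 i h)
  have down : ∀ i : ℤ, Finsupp.single (Sum.inl i) 1 ∈ p →
      Finsupp.single (Sum.inl (i - 1)) 1 ∈ p := fun i h =>
    stepX2 i (stepX1 i h)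
  have allinl : ∀ i : ℤ, Finsupp.single (Sum.inl i) 1 ∈ p := by
    intro i
    have key : ∀ n : ℤ, Finsupp.single (Sum.inl (i₀ + n)) 1 ∈ p := by
      intro n
      induction n using Int.induction_on with
      | zero => simpa using hi₀
      | succ m hm => have := up _ hm; rwa [add_assoc] at this
      | pred m hm =>
        have := down _ hm
        rwa [show i₀ + (-m : ℤ) - 1 = i₀ + (-m - 1) by ring] at this
    have := key (i - i₀)
    rwa [show i₀ + (i - i₀) = i by ring] at this
  have allsingle : ∀ k' : ℤ ⊕ ℤ, Finsupp.single k' 1 ∈ p := by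
    rintro (i | i)
    · exact allinl i
    · exact stepX1 i (allinl i)
  rw [eq_top_iff]
  intro w _
  have : w = w.sum fun k' c => Finsupp.single k' c := (Finsupp.sum_single w).symm
  rw [this]
  refine Submodule.sum_mem p fun k' _ => ?_
  show Finsupp.single k' (w k') ∈ p
  have h2 := p.smul_mem (w k') (allsingle k')
  rwa [Finsupp.smul_single', mul_one] at h2
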